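/- Let V be a 4-dimensional real vector space and let ω be an alternating 2-form on V with ω ∧ ω ≠ 0. Then every alternating 2-form α on V admits a unique decomposition α = α₀ + λ·ω, where λ ∈ ℝ and α₀ is an alternating 2-form satisfying α₀ ∧ ω = 0. -/

import Mathlib

/-- The wedge product of two alternating 2-forms, as an alternating 4-form. -/
noncomputable def wedge22 {V : Type*} [AddCommGroup V] [Module ℝ V]
    (α β : V [⋀^Fin 2]→ₗ[ℝ] ℝ) : V [⋀^Fin 4]→ₗ[ℝ] ℝ :=
  ((TensorProduct.lid ℝ ℝ).toLinearMap.compAlternatingMap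
    (α.domCoprod β)).domDomCongr finSumFinEquiv

lemma wedge22_add_left {V : Type*} [AddCommGroup V] [Module ℝ V]
    (a b ω : V [⋀^Fin 2]→ₗ[ℝ] ℝ) :
    wedge22 (a + b) ω = wedge22 a ω + wedge22 b ω := by
  unfold wedge22
  rw [← AlternatingMap.domCoprod'_apply, ← AlternatingMap.domCoprod'_apply,
    ← AlternatingMap.domCoprod'_apply, TensorProduct.add_tmul, map_add,
    LinearMap.compAlternatingMap_add, AlternatingMap.domDomCongr_add]

lemma wedge22_smul_left {V : Type*} [AddCommGroup V] [Module ℝ V]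
    (c : ℝ) (a ω : V [⋀^Fin 2]→ₗ[ℝ] ℝ) :
    wedge22 (c • a) ω = c • wedge22 a ω := by
  unfold wedge22
  rw [← AlternatingMap.domCoprod'_apply, ← AlternatingMap.domCoprod'_apply,
    ← TensorProduct.smul_tmul', map_smul,
    LinearMap.compAlternatingMap_smul, AlternatingMap.domDomCongr_smul]

lemma wedge22_sub_left {V : Type*} [AddCommGroup V] [Module ℝ V]
    (a b ω : V [⋀^Fin 2]→ₗ[ℝ] ℝ) :
    wedge22 (a - b) ω = wedge22 a ω - wedge22 b ω := by
  have h := wedge22_add_left (a - b) b ω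
  rw [sub_add_cancel] at h
  rw [h]; abel

/-- Hodge–Lepage–Lychagin in degree two. On a 4-dimensional real vector
space with `ω ∧ ω ≠ 0`, every alternating 2-form `α` decomposes uniquely as
`α = α₀ + λ • ω` with `α₀ ∧ ω = 0`. -/
theorem stmt_4 (V : Type*) [AddCommGroup V] [Module ℝ V] [FiniteDimensional ℝ V]
    (hdim : Module.finrank ℝ V = 4)
    (ω : V [⋀^Fin 2]→ₗ[ℝ] ℝ) (hωω : wedge22 ω ω ≠ 0)
    (α : V [⋀^Fin 2]→ₗ[ℝ] ℝ)  :
    ∃! p : (V [⋀^Fin 2]→ₗ[ℝ] ℝ) × ℝ,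
      α = p.1 + p.2 • ω ∧ wedge22 p.1 ω = 0 := by
  -- a basis indexed by `Fin 4`
  let b : Module.Basis (Fin 4) ℝ V := (Module.finBasis ℝ V).reindex (finCongr hdim)
  have hωb : wedge22 ω ω b ≠ 0 := by
    intro h
    apply hωω
    rw [(wedge22 ω ω).eq_smul_basis_det b, h, zero_smul]
  set c : ℝ := wedge22 α ω b / wedge22 ω ω b with hc
  have key : ∀ μ : ℝ, wedge22 (α - μ • ω) ω = 0 → μ = c := by
    intro μ h
    have h2 : wedge22 α ω - μ • wedge22 ω ω = 0 := by
      rw [← wedge22_smul_left, ← wedge22_sub_left, h]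
    have hb : wedge22 α ω b - μ * wedge22 ω ω b = 0 := by
      have := congrArg (fun f : V [⋀^Fin 4]→ₗ[ℝ] ℝ => f b) h2
      simpa using this
    rw [hc, eq_div_iff hωb]
    linarith [mul_comm μ (wedge22 ω ω b)]
  have hzero : wedge22 (α - c • ω) ω = 0 := by
    rw [wedge22_sub_left, wedge22_smul_left]
    rw [(wedge22 α ω).eq_smul_basis_det b, (wedge22 ω ω).eq_smul_basis_det b,
      smul_smul, hc]
    rw [div_mul_cancel₀ _ hωb, sub_self]
  refine ⟨(α - c • ω, c), ⟨(sub_add_cancel α (c • ω)).symm, hzero⟩, ?_⟩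
  rintro ⟨β, μ⟩ ⟨h1, h2⟩
  have hβ : β = α - μ • ω := by rw [h1]; abel
  have hμ : μ = c := key μ (hβ ▸ h2)
  simp only [Prod.mk.injEq]
  exact ⟨by rw [hβ, hμ], hμ⟩
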